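/- Let μ, ν be finite symmetric Borel measures on ℝ with continuous/atomic decompositions μ = μ_c + μ_a and ν = ν_c + ν_a, satisfying μ_c ∗ μ_c ≺ μ_c, ν_c ∗ ν_c ≺ ν_c, μ_a ≠ 0, ν_a ≠ 0. Let Λ(μ_a) and Λ(ν_a) be the subgroups of ℝ generated by the atoms of μ_a and ν_a respectively, and δ_{Λ(μ_a)}, δ_{Λ(ν_a)} finite atomic measures with those atom sets. If the joint measure classes of (μ^{∗k})_{k≥1} and (ν^{∗k})_{k≥1} coincide, then Λ(μ_a) = Λ(ν_a) and the measure classes of μ_c ∗ δ_{Λ(μ_a)} and ν_c ∗ δ_{Λ(ν_a)} coincide. -/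

import Mathlib

open MeasureTheory Set
open scoped ENNReal

noncomputable def convPow (μ : MeasureTheory.Measure ℝ) : ℕ → MeasureTheory.Measure ℝ
  | 0 => MeasureTheory.Measure.dirac 0
  | n + 1 => (convPow μ n).conv μ

instance convPow.isFiniteMeasure (μ : Measure ℝ) [IsFiniteMeasure μ] :
    ∀ n, IsFiniteMeasure (convPow μ n)
  | 0 => by unfold convPow; infer_instance
  | n + 1 => by
      have := convPow.isFiniteMeasure μ n
      unfold convPow; infer_instance

lemma convPow_one (μ : Measure ℝ) [SFinite μ] : convPow μ 1 = μ := by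
  show (Measure.dirac 0).conv μ = μ
  simp

lemma convPow_succ (μ : Measure ℝ) (n : ℕ) : convPow μ (n + 1) = (convPow μ n).conv μ := rfl

section aux
lemma conv_def (ρ σ : Measure ℝ) :
    ρ.conv σ = (ρ.prod σ).map (fun p : ℝ × ℝ => p.1 + p.2) := rfl

lemma prod_mono_left {ρ ρ' σ : Measure ℝ} [SFinite σ]
    (h : ρ ≤ ρ') : ρ.prod σ ≤ ρ'.prod σ := by
  rw [Measure.le_iff]
  intro s hs
  rw [Measure.prod_apply hs, Measure.prod_apply hs]
  exact lintegral_mono' h le_rfl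

lemma conv_mono_left {ρ ρ' σ : Measure ℝ} [SFinite σ]
    (h : ρ ≤ ρ') : ρ.conv σ ≤ ρ'.conv σ := by
  rw [conv_def, conv_def]
  exact Measure.map_mono (prod_mono_left h) measurable_add

lemma conv_smul_left (c : ℝ≥0∞) (ρ σ : Measure ℝ) [SFinite ρ] [SFinite σ] :
    (c • ρ).conv σ = c • (ρ.conv σ) := by
  rw [conv_def, conv_def, ← Measure.map_smul]
  congr 1
  ext s hs
  rw [Measure.smul_apply, Measure.prod_apply hs, Measure.prod_apply hs,
    lintegral_smul_measure, smul_eq_mul]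

lemma dirac_conv_eq (x : ℝ) (ρ : Measure ℝ) [SFinite ρ] :
    (Measure.dirac x).conv ρ = ρ.map (fun y => x + y) := by
  rw [conv_def, Measure.dirac_prod, Measure.map_map measurable_add (by fun_prop)]
  rfl

lemma conv_assoc (ρ σ τ : Measure ℝ) [SFinite ρ] [SFinite σ] [SFinite τ] :
    (ρ.conv σ).conv τ = ρ.conv (σ.conv τ) := by
  have h1 : ((ρ.conv σ).prod τ)
      = Measure.map (Prod.map (fun p : ℝ × ℝ => p.1 + p.2) id) ((ρ.prod σ).prod τ) := by
    rw [conv_def, ← Measure.map_id (μ := τ), Measure.map_prod_map _ _ measurable_add measurable_id,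
      Measure.map_id]
  have h2 : (ρ.prod (σ.conv τ))
      = Measure.map (Prod.map id (fun p : ℝ × ℝ => p.1 + p.2)) (ρ.prod (σ.prod τ)) := by
    rw [conv_def, ← Measure.map_id (μ := ρ), Measure.map_prod_map _ _ measurable_id measurable_add,
      Measure.map_id]
  rw [conv_def (ρ.conv σ) τ, h1, conv_def ρ (σ.conv τ), h2, ← Measure.prodAssoc_prod,
    Measure.map_map measurable_add (by fun_prop),
    Measure.map_map (by fun_prop) (by fun_prop),
    Measure.map_map (by fun_prop) (by fun_prop)]
  congr 1
  ext p
  simp [MeasurableEquiv.prodAssoc, Prod.map, add_assoc]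

lemma conv_singleton_ge (ρ σ : Measure ℝ) [SFinite ρ] [SFinite σ] (x y : ℝ) :
    ρ {x} * σ {y} ≤ (ρ.conv σ) {x + y} := by
  rw [conv_def, Measure.map_apply measurable_add (measurableSet_singleton _),
    ← Measure.prod_prod]
  apply measure_mono
  rintro ⟨a, b⟩ ⟨ha, hb⟩
  simp only [mem_singleton_iff] at ha hb
  simp [ha, hb]

lemma conv_ac {ρ ρ' σ σ' : Measure ℝ} [SFinite σ] [SFinite ρ'] [SFinite σ']
    (h1 : ρ ≪ ρ') (h2 : σ ≪ σ') : ρ.conv σ ≪ ρ'.conv σ' := by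
  rw [conv_def, conv_def]
  exact (h1.prod h2).map measurable_add

lemma conv_singleton_of_cont (ρ σ : Measure ℝ) [SFinite ρ] [SFinite σ]
    (h : ∀ x : ℝ, σ {x} = 0) (x : ℝ) : (ρ.conv σ) {x} = 0 := by
  rw [conv_def, Measure.map_apply measurable_add (measurableSet_singleton _),
    Measure.prod_apply (measurable_add (measurableSet_singleton _))]
  have key : ∀ a : ℝ, σ (Prod.mk a ⁻¹' ((fun p : ℝ × ℝ => p.1 + p.2) ⁻¹' {x})) = 0 := by
    intro a
    have : (Prod.mk a ⁻¹' ((fun p : ℝ × ℝ => p.1 + p.2) ⁻¹' {x})) = {x - a} := by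
      ext b; simp only [mem_preimage, mem_singleton_iff]
      constructor <;> intro h' <;> linarith
    rw [this]; exact h _
  simp only [key, lintegral_zero]

lemma countable_atoms (ρ : Measure ℝ) [IsFiniteMeasure ρ] : {x : ℝ | 0 < ρ {x}}.Countable := by
  have := Measure.countable_meas_level_set_pos (μ := ρ) (g := id) measurable_id
  simpa [Set.setOf_eq_eq_singleton'] using this

lemma countable_closure_subgroup {A : Set ℝ} (hA : A.Countable) :
    ((AddSubgroup.closure A : AddSubgroup ℝ) : Set ℝ).Countable := by
  have hB : (A ∪ -A).Countable := by
    refine hA.union ?_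
    have : (-A : Set ℝ) = Neg.neg ⁻¹' A := by ext x; simp [Set.mem_neg]
    rw [this]
    exact hA.preimage neg_injective
  haveI := hB.to_subtype
  have : ((AddSubgroup.closure A : AddSubgroup ℝ) : Set ℝ) ⊆
      Set.range (fun l : List ↥(A ∪ -A) => (l.map Subtype.val).sum) := by
    intro x hx
    rw [SetLike.mem_coe, ← AddSubgroup.mem_toAddSubmonoid,
      AddSubgroup.closure_toAddSubmonoid] at hx
    obtain ⟨l, hl, rfl⟩ := AddSubmonoid.exists_list_of_mem_closure hx
    refine ⟨l.attach.map (fun y => ⟨y.1, hl y.1 y.2⟩), ?_⟩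
    simp [List.map_map, Function.comp_def]
  exact (Set.countable_range _).mono this
end aux

lemma key (μ μc μa : Measure ℝ) [IsFiniteMeasure μ] [IsFiniteMeasure μc] [IsFiniteMeasure μa]
    (hsum : μ = μc + μa) (hsym : μ.map (fun x : ℝ => -x) = μ)
    (hcont : ∀ x : ℝ, μc {x} = 0)
    (hatomic : μa ({x : ℝ | 0 < μa {x}}ᶜ) = 0)
    (hconv : μc.conv μc ≪ μc) (ha : μa ≠ 0)
    (Λ : AddSubgroup ℝ) (hΛ : Λ = AddSubgroup.closure {x : ℝ | 0 < μa {x}})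
    (δ : Measure ℝ) [IsFiniteMeasure δ]
    (hδatoms : ∀ x : ℝ, 0 < δ {x} ↔ x ∈ Λ) (hδconc : δ ((Λ : Set ℝ)ᶜ) = 0)
    (U : Set ℝ) (hU : MeasurableSet U) :
    (∀ k : ℕ, 1 ≤ k → convPow μ k U = 0) ↔ ((μc.conv δ) U = 0 ∧ ∀ x ∈ Λ, x ∉ U) := by
  set A := {x : ℝ | 0 < μa {x}} with hA
  have hμ_singleton : ∀ x : ℝ, μ {x} = μa {x} := by
    intro x
    rw [hsum, Measure.add_apply, hcont, zero_add]
  have hsymm : ∀ x : ℝ, μ {-x} = μ {x} := by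
    intro x
    conv_rhs => rw [← hsym]
    rw [Measure.map_apply measurable_neg (measurableSet_singleton x)]
    congr 1
    ext y
    simp only [mem_preimage, mem_singleton_iff]
    constructor <;> intro h <;> linarith
  have hApos : ∀ y ∈ A ∪ -A, 0 < μ {y} := by
    rintro y (hy | hy)
    · rw [hμ_singleton]; exact hy
    · rw [Set.mem_neg] at hy
      rw [← hsymm y, hμ_singleton]; exact hy
  have hAne : A.Nonempty := by
    by_contra h
    rw [Set.not_nonempty_iff_eq_empty] at h
    apply ha
    rw [h, Set.compl_empty] at hatomic
    exact Measure.measure_univ_eq_zero.mp hatomic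
  have pos_of_mem : ∀ x ∈ Λ, ∃ n : ℕ, 1 ≤ n ∧ 0 < convPow μ n {x} := by
    have hlist : ∀ l : List ℝ, (∀ y ∈ l, y ∈ A ∪ -A) →
        ∃ n : ℕ, 1 ≤ n ∧ 0 < convPow μ n {l.sum} := by
      intro l
      induction l with
      | nil =>
        intro _
        obtain ⟨a, haA⟩ := hAne
        refine ⟨2, le_refl _ |>.trans (by norm_num), ?_⟩
        have h2 : convPow μ 2 = μ.conv μ := by
          rw [show (2:ℕ) = 1 + 1 from rfl, convPow_succ, convPow_one]
        rw [List.sum_nil, h2]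
        have h0 : (0 : ℝ) = a + (-a) := by ring
        rw [h0]
        refine lt_of_lt_of_le ?_ (conv_singleton_ge μ μ a (-a))
        have hpa : 0 < μ {a} := hApos a (Or.inl haA)
        have hpna : 0 < μ {-a} := by rw [hsymm]; exact hpa
        exact ENNReal.mul_pos hpa.ne' hpna.ne'
      | cons y t ih =>
        intro hmem
        obtain ⟨n, hn, hpos⟩ := ih (fun z hz => hmem z (List.mem_cons_of_mem y hz))
        refine ⟨n + 1, by omega, ?_⟩
        rw [convPow_succ, Measure.conv_comm, List.sum_cons]
        refine lt_of_lt_of_le ?_ (conv_singleton_ge μ (convPow μ n) y t.sum)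
        exact ENNReal.mul_pos (hApos y (hmem y List.mem_cons_self)).ne' hpos.ne'
    intro x hx
    rw [hΛ, ← AddSubgroup.mem_toAddSubmonoid, AddSubgroup.closure_toAddSubmonoid] at hx
    obtain ⟨l, hl, rfl⟩ := AddSubmonoid.exists_list_of_mem_closure hx
    exact hlist l hl
  have translate : ∀ x ∈ Λ, (∀ k : ℕ, 1 ≤ k → convPow μ k U = 0) →
      μc ((fun y => x + y) ⁻¹' U) = 0 := by
    intro x hx hnull
    obtain ⟨n, hn, hpos⟩ := pos_of_mem x hx
    have h0 : convPow μ (n + 1) U = 0 := hnull (n + 1) (by omega)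
    have hsplit : convPow μ (n + 1) = (convPow μ n).conv μc + (convPow μ n).conv μa := by
      rw [convPow_succ, hsum, Measure.conv_add]
    have h1 : ((convPow μ n).conv μc) U = 0 := by
      rw [hsplit, Measure.coe_add, Pi.add_apply] at h0
      exact (add_eq_zero.mp h0).1
    have hle : (convPow μ n {x}) • Measure.dirac x ≤ convPow μ n := by
      rw [Measure.le_iff]
      intro s hs
      by_cases hxs : x ∈ s
      · rw [Measure.smul_apply, Measure.dirac_apply' x hs, Set.indicator_of_mem hxs]
        simpa using measure_mono (Set.singleton_subset_iff.mpr hxs)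
      · rw [Measure.smul_apply, Measure.dirac_apply' x hs, Set.indicator_of_notMem hxs]
        simp
    have h2 : (((convPow μ n {x}) • Measure.dirac x).conv μc) U = 0 := by
      have := conv_mono_left (σ := μc) hle
      exact le_antisymm (h1 ▸ this U) zero_le
    rw [conv_smul_left, Measure.smul_apply, smul_eq_mul, mul_eq_zero] at h2
    rcases h2 with h2 | h2
    · exact absurd h2 hpos.ne'
    · rw [dirac_conv_eq, Measure.map_apply (measurable_const_add x) hU] at h2
      exact h2
  have Λcount : ((Λ : AddSubgroup ℝ) : Set ℝ).Countable := by
    rw [hΛ]; exact countable_closure_subgroup (countable_atoms μa)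
  constructor
  · intro h
    have hnot : ∀ x ∈ Λ, x ∉ U := by
      intro x hx hxU
      obtain ⟨n, hn, hpos⟩ := pos_of_mem x hx
      exact absurd (measure_mono_null (Set.singleton_subset_iff.mpr hxU) (h n hn)) hpos.ne'
    refine ⟨?_, hnot⟩
    rw [conv_def, Measure.map_apply measurable_add hU]
    have hsub : (fun p : ℝ × ℝ => p.1 + p.2) ⁻¹' U ⊆
        (⋃ x ∈ (Λ : Set ℝ), {y : ℝ | y + x ∈ U} ×ˢ ({x} : Set ℝ)) ∪
          (Set.univ ×ˢ ((Λ : Set ℝ)ᶜ)) := by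
      rintro ⟨a, b⟩ hp
      by_cases hb : b ∈ (Λ : Set ℝ)
      · left
        refine Set.mem_biUnion hb ⟨hp, rfl⟩
      · right
        exact ⟨trivial, hb⟩
    refine measure_mono_null hsub (measure_union_null ?_ ?_)
    · rw [measure_biUnion_null_iff Λcount]
      intro x hx
      rw [Measure.prod_prod]
      have : {y : ℝ | y + x ∈ U} = (fun y => x + y) ⁻¹' U := by
        ext y; simp [add_comm]
      rw [this, translate x hx h, zero_mul]
    · rw [Measure.prod_prod, hδconc, mul_zero]
  · rintro ⟨hU1, hU2⟩ k hk
    have hδU : δ U = 0 := by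
      refine measure_mono_null (fun x hx => ?_) hδconc
      exact fun hmem => hU2 x hmem hx
    set m := μc.conv δ + δ with hm
    have hmU : m U = 0 := by
      rw [hm, Measure.coe_add, Pi.add_apply, hU1, hδU, add_zero]
    have c0pos : 0 < δ {0} := (hδatoms 0).mpr Λ.zero_mem
    have c1 : μc ≪ μc.conv δ := by
      have hdle : (δ {0}) • Measure.dirac (0 : ℝ) ≤ δ := by
        rw [Measure.le_iff]
        intro s hs
        by_cases hxs : (0:ℝ) ∈ s
        · rw [Measure.smul_apply, Measure.dirac_apply' _ hs, Set.indicator_of_mem hxs]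
          simpa using measure_mono (Set.singleton_subset_iff.mpr hxs)
        · rw [Measure.smul_apply, Measure.dirac_apply' _ hs, Set.indicator_of_notMem hxs]
          simp
      have hle : (δ {0}) • μc ≤ μc.conv δ := by
        have e : (δ {0}) • μc = ((δ {0}) • Measure.dirac (0:ℝ)).conv μc := by
          rw [conv_smul_left, dirac_conv_eq]
          simp
        rw [e, Measure.conv_comm μc δ]
        exact conv_mono_left hdle
      intro s hs0
      have := hle s
      rw [Measure.smul_apply, smul_eq_mul, hs0] at this
      have hmul : δ {0} * μc s = 0 := le_antisymm this zero_le
      rcases mul_eq_zero.mp hmul with h | h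
      · exact absurd h c0pos.ne'
      · exact h
    have interΛ : ∀ s : Set ℝ, δ s = 0 → s ∩ (Λ : Set ℝ) = ∅ := by
      intro s hs
      rw [Set.eq_empty_iff_forall_notMem]
      rintro x ⟨hxs, hxΛ⟩
      have h1 : 0 < δ {x} := (hδatoms x).mpr hxΛ
      have h2 : δ {x} = 0 :=
        measure_mono_null (Set.singleton_subset_iff.mpr hxs) hs
      exact h1.ne' h2
    have c2 : μa ≪ δ := by
      refine Measure.AbsolutelyContinuous.mk (fun s hs hδs => ?_)
      have hsΛ := interΛ s hδs
      have hAsub : s ∩ A ⊆ (∅ : Set ℝ) := by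
        rintro x ⟨hxs, hxA⟩
        rw [← hsΛ]
        exact ⟨hxs, hΛ ▸ AddSubgroup.subset_closure hxA⟩
      have h1 : μa (s ∩ A) = 0 := measure_mono_null hAsub (measure_empty)
      have h2 : μa (s \ A) = 0 := measure_mono_null (fun x hx => hx.2) hatomic
      have := measure_le_inter_add_diff μa s A
      rw [h1, h2, add_zero] at this
      exact le_antisymm this zero_le
    have c3 : δ.conv δ ≪ δ := by
      refine Measure.AbsolutelyContinuous.mk (fun s hs hδs => ?_)
      have hsΛ := interΛ s hδs
      rw [conv_def, Measure.map_apply measurable_add hs]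
      have hsub : (fun p : ℝ × ℝ => p.1 + p.2) ⁻¹' s ⊆
          (((Λ : Set ℝ)ᶜ) ×ˢ Set.univ) ∪ (Set.univ ×ˢ ((Λ : Set ℝ)ᶜ)) := by
        rintro ⟨a, b⟩ hp
        by_cases haΛ : a ∈ Λ
        · by_cases hbΛ : b ∈ Λ
          · exfalso
            have : a + b ∈ s ∩ (Λ : Set ℝ) := ⟨hp, Λ.add_mem haΛ hbΛ⟩
            rw [hsΛ] at this
            exact this
          · exact Or.inr ⟨trivial, hbΛ⟩
        · exact Or.inl ⟨haΛ, trivial⟩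
      refine measure_mono_null hsub (measure_union_null ?_ ?_)
      · rw [Measure.prod_prod, hδconc, zero_mul]
      · rw [Measure.prod_prod, hδconc, mul_zero]
    have hμcδ_le : μc.conv δ ≤ m := by
      rw [hm]
      exact Measure.le_iff'.mpr fun s => by
        rw [Measure.coe_add, Pi.add_apply]; exact le_add_right le_rfl
    have hδ_le : δ ≤ m := by
      rw [hm]
      exact Measure.le_iff'.mpr fun s => by
        rw [Measure.coe_add, Pi.add_apply]; exact le_add_left le_rfl
    have c4 : μ ≪ m := by
      rw [hsum]
      exact (c1.trans hμcδ_le.absolutelyContinuous).add_left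
        (c2.trans hδ_le.absolutelyContinuous)
    have c5 : m.conv μ ≪ m := by
      rw [hsum, Measure.conv_add]
      have t1 : m.conv μc ≪ m := by
        rw [hm, Measure.add_conv]
        have e : (μc.conv δ).conv μc = (μc.conv μc).conv δ := by
          rw [conv_assoc, Measure.conv_comm δ μc, ← conv_assoc]
        have h1 : (μc.conv δ).conv μc ≪ m := by
          rw [e]
          exact (conv_ac hconv (Measure.AbsolutelyContinuous.refl δ)).trans
            hμcδ_le.absolutelyContinuous
        have h2 : δ.conv μc ≪ m := by
          rw [Measure.conv_comm]
          exact hμcδ_le.absolutelyContinuous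
        exact h1.add_left h2
      have t2 : m.conv μa ≪ m := by
        have step1 : m.conv μa ≪ m.conv δ :=
          conv_ac (Measure.AbsolutelyContinuous.refl m) c2
        have step2 : m.conv δ ≪ m := by
          rw [hm, Measure.add_conv]
          have h1 : (μc.conv δ).conv δ ≪ m := by
            rw [conv_assoc]
            exact ((conv_ac (Measure.AbsolutelyContinuous.refl μc) c3)).trans
              hμcδ_le.absolutelyContinuous
          have h2 : δ.conv δ ≪ m := c3.trans hδ_le.absolutelyContinuous
          exact h1.add_left h2
        exact step1.trans step2
      exact t1.add_left t2
    have hac : ∀ j : ℕ, 1 ≤ j → convPow μ j ≪ m := by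
      intro j hj
      induction j, hj using Nat.le_induction with
      | base => rw [convPow_one]; exact c4
      | succ n hn ih =>
        rw [convPow_succ]
        exact (conv_ac ih (Measure.AbsolutelyContinuous.refl μ)).trans c5
    exact (hac k hk) hmU

theorem stmt12 (μ μc μa ν νc νa : Measure ℝ)
    [IsFiniteMeasure μ] [IsFiniteMeasure μc] [IsFiniteMeasure μa]
    [IsFiniteMeasure ν] [IsFiniteMeasure νc] [IsFiniteMeasure νa]
    (hμsum : μ = μc + μa) (hνsum : ν = νc + νa)
    (hμsym : μ.map (fun x : ℝ => -x) = μ) (hνsym : ν.map (fun x : ℝ => -x) = ν)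
    (hμcont : ∀ x : ℝ, μc {x} = 0) (hνcont : ∀ x : ℝ, νc {x} = 0)
    (hμatomic : μa ({x : ℝ | 0 < μa {x}}ᶜ) = 0)
    (hνatomic : νa ({x : ℝ | 0 < νa {x}}ᶜ) = 0)
    (hμconv : μc.conv μc ≪ μc) (hνconv : νc.conv νc ≪ νc)
    (hμa : μa ≠ 0) (hνa : νa ≠ 0)
    (Λμ Λν : AddSubgroup ℝ)
    (hΛμ : Λμ = AddSubgroup.closure {x : ℝ | 0 < μa {x}})
    (hΛν : Λν = AddSubgroup.closure {x : ℝ | 0 < νa {x}})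
    (δμ δν : Measure ℝ) [IsFiniteMeasure δμ] [IsFiniteMeasure δν]
    (hδμatoms : ∀ x : ℝ, 0 < δμ {x} ↔ x ∈ Λμ) (hδμconc : δμ ((Λμ : Set ℝ)ᶜ) = 0)
    (hδνatoms : ∀ x : ℝ, 0 < δν {x} ↔ x ∈ Λν) (hδνconc : δν ((Λν : Set ℝ)ᶜ) = 0)
    (hjoint : ∀ U : Set ℝ, MeasurableSet U →
      ((∀ k : ℕ, 1 ≤ k → convPow μ k U = 0) ↔ (∀ k : ℕ, 1 ≤ k → convPow ν k U = 0))) :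
    Λμ = Λν ∧
    ∀ U : Set ℝ, MeasurableSet U → ((μc.conv δμ) U = 0 ↔ (νc.conv δν) U = 0) := by
  have keyμ := fun (U : Set ℝ) (hU : MeasurableSet U) =>
    key μ μc μa hμsum hμsym hμcont hμatomic hμconv hμa Λμ hΛμ δμ hδμatoms hδμconc U hU
  have keyν := fun (U : Set ℝ) (hU : MeasurableSet U) =>
    key ν νc νa hνsum hνsym hνcont hνatomic hνconv hνa Λν hΛν δν hδνatoms hδνconc U hU
  have hΛcountμ : ((Λμ : Set ℝ)).Countable := by
    rw [hΛμ]; exact countable_closure_subgroup (countable_atoms μa)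
  have hΛcountν : ((Λν : Set ℝ)).Countable := by
    rw [hΛν]; exact countable_closure_subgroup (countable_atoms νa)
  have hμcδ_cont : ∀ x : ℝ, (μc.conv δμ) {x} = 0 := by
    intro x
    rw [Measure.conv_comm]
    exact conv_singleton_of_cont δμ μc hμcont x
  have hνcδ_cont : ∀ x : ℝ, (νc.conv δν) {x} = 0 := by
    intro x
    rw [Measure.conv_comm]
    exact conv_singleton_of_cont δν νc hνcont x
  have hΛeq : Λμ = Λν := by
    ext x
    have hs : MeasurableSet ({x} : Set ℝ) := measurableSet_singleton x
    constructor
    · intro hx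
      by_contra hnot
      have hν0 : ∀ k : ℕ, 1 ≤ k → convPow ν k {x} = 0 := by
        refine (keyν {x} hs).mpr ⟨hνcδ_cont x, ?_⟩
        intro z hz hzx
        rw [Set.mem_singleton_iff] at hzx
        exact hnot (hzx ▸ hz)
      have hμ0 : ∀ k : ℕ, 1 ≤ k → convPow μ k {x} = 0 := (hjoint {x} hs).mpr hν0
      exact ((keyμ {x} hs).mp hμ0).2 x hx rfl
    · intro hx
      by_contra hnot
      have hμ0 : ∀ k : ℕ, 1 ≤ k → convPow μ k {x} = 0 := by
        refine (keyμ {x} hs).mpr ⟨hμcδ_cont x, ?_⟩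
        intro z hz hzx
        rw [Set.mem_singleton_iff] at hzx
        exact hnot (hzx ▸ hz)
      have hν0 : ∀ k : ℕ, 1 ≤ k → convPow ν k {x} = 0 := (hjoint {x} hs).mp hμ0
      exact ((keyν {x} hs).mp hν0).2 x hx rfl
  refine ⟨hΛeq, ?_⟩
  intro U hU
  have countable_null : ∀ (ρ : Measure ℝ), (∀ x : ℝ, ρ {x} = 0) →
      ∀ s : Set ℝ, s.Countable → ρ s = 0 := by
    intro ρ hρ s hsc
    rw [← Set.biUnion_of_singleton s]
    rw [measure_biUnion_null_iff hsc]
    exact fun x _ => hρ x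
  constructor
  · intro h1
    have hVmeas : MeasurableSet (U \ (Λμ : Set ℝ)) := hU.diff hΛcountμ.measurableSet
    have hV1 : (μc.conv δμ) (U \ (Λμ : Set ℝ)) = 0 :=
      measure_mono_null Set.diff_subset h1
    have hV2 : ∀ x ∈ Λμ, x ∉ U \ (Λμ : Set ℝ) := fun x hx hxV => hxV.2 hx
    have hVν : ∀ k : ℕ, 1 ≤ k → convPow ν k (U \ (Λμ : Set ℝ)) = 0 :=
      (hjoint _ hVmeas).mp ((keyμ _ hVmeas).mpr ⟨hV1, hV2⟩)
    have hVν2 : (νc.conv δν) (U \ (Λμ : Set ℝ)) = 0 := ((keyν _ hVmeas).mp hVν).1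
    have hUΛ : (νc.conv δν) (U ∩ (Λμ : Set ℝ)) = 0 :=
      countable_null _ hνcδ_cont _ (hΛcountμ.mono Set.inter_subset_right)
    have hsub : U ⊆ (U \ (Λμ : Set ℝ)) ∪ (U ∩ (Λμ : Set ℝ)) := by
      intro x hx
      by_cases hxΛ : x ∈ (Λμ : Set ℝ)
      · exact Or.inr ⟨hx, hxΛ⟩
      · exact Or.inl ⟨hx, hxΛ⟩
    exact measure_mono_null hsub (measure_union_null hVν2 hUΛ)
  · intro h1
    have hVmeas : MeasurableSet (U \ (Λν : Set ℝ)) := hU.diff hΛcountν.measurableSet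
    have hV1 : (νc.conv δν) (U \ (Λν : Set ℝ)) = 0 :=
      measure_mono_null Set.diff_subset h1
    have hV2 : ∀ x ∈ Λν, x ∉ U \ (Λν : Set ℝ) := fun x hx hxV => hxV.2 hx
    have hVμ : ∀ k : ℕ, 1 ≤ k → convPow μ k (U \ (Λν : Set ℝ)) = 0 :=
      (hjoint _ hVmeas).mpr ((keyν _ hVmeas).mpr ⟨hV1, hV2⟩)
    have hVμ2 : (μc.conv δμ) (U \ (Λν : Set ℝ)) = 0 := ((keyμ _ hVmeas).mp hVμ).1
    have hUΛ : (μc.conv δμ) (U ∩ (Λν : Set ℝ)) = 0 :=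
      countable_null _ hμcδ_cont _ (hΛcountν.mono Set.inter_subset_right)
    have hsub : U ⊆ (U \ (Λν : Set ℝ)) ∪ (U ∩ (Λν : Set ℝ)) := by
      intro x hx
      by_cases hxΛ : x ∈ (Λν : Set ℝ)
      · exact Or.inr ⟨hx, hxΛ⟩
      · exact Or.inl ⟨hx, hxΛ⟩
    exact measure_mono_null hsub (measure_union_null hVμ2 hUΛ)
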